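/- For μ ∈ (1, 3), the logistic map ℓ_μ has exactly two nodes in its chain-recurrent set: {0} and {1 - 1/μ}; equivalently, the chain-recurrent set of ℓ_μ on [0,1] equals {0, 1 - 1/μ} when μ ∈ (1,3). -/

import Mathlib

open Filter Topology

/-- The logistic map `ℓ_μ(x) = μ x (1 - x)`. -/
def logistic (μ x : ℝ) : ℝ := μ * x * (1 - x)

lemma logistic_cont (μ : ℝ) : Continuous (logistic μ) := by
  unfold logistic; fun_prop

lemma logistic_sub (μ a : ℝ) (hμ : μ ≠ 0) :
    logistic μ a - (1 - 1/μ) = (a - (1 - 1/μ)) * (1 - μ * a) := by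
  unfold logistic; field_simp; ring

lemma logistic_fix (μ : ℝ) (hμ : μ ≠ 0) : logistic μ (1 - 1/μ) = 1 - 1/μ := by
  unfold logistic; field_simp; ring

lemma logistic_diff (μ a b : ℝ) :
    logistic μ a - logistic μ b = μ * (a - b) * (1 - a - b) := by
  unfold logistic; ring

lemma logistic_le_quarter (μ y : ℝ) (hμ : 0 < μ) : logistic μ y ≤ μ/4 := by
  unfold logistic; nlinarith [sq_nonneg (1 - 2*y)]

lemma logistic_fixed_class (μ L : ℝ) (hμ : μ ≠ 0) (h : logistic μ L = L) :
    L = 0 ∨ L = 1 - 1/μ := by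
  have h2 : L * (μ - 1 - μ * L) = 0 := by
    unfold logistic at h; linear_combination h
  rcases mul_eq_zero.mp h2 with h3 | h3
  · exact Or.inl h3
  · right; field_simp; linarith

lemma lim_fixed {f : ℝ → ℝ} (hf : Continuous f) {y : ℕ → ℝ}
    (hy : ∀ n, y (n+1) = f (y n)) {L : ℝ} (h : Tendsto y atTop (𝓝 L)) :
    f L = L := by
  have h1 : Tendsto (fun n => y (n+1)) atTop (𝓝 L) :=
    (tendsto_add_atTop_iff_nat 1).mpr h
  have h2 : Tendsto (fun n => f (y n)) atTop (𝓝 (f L)) := (hf.tendsto L).comp h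
  simp_rw [← hy] at h2
  exact tendsto_nhds_unique h2 h1

lemma mono_orbit_lim {f : ℝ → ℝ} (hf : Continuous f) (z : ℕ → ℝ)
    (hstep : ∀ n, z (n+1) = f (z n)) (hmono : Monotone z) (b : ℝ)
    (hb : ∀ n, z n ≤ b) :
    ∃ L, f L = L ∧ z 0 ≤ L ∧ L ≤ b ∧ Tendsto z atTop (𝓝 L) := by
  have hbdd : BddAbove (Set.range z) := ⟨b, by rintro _ ⟨n, rfl⟩; exact hb n⟩
  have ht := tendsto_atTop_ciSup hmono hbdd
  exact ⟨⨆ n, z n, lim_fixed hf hstep ht, le_ciSup hbdd 0, ciSup_le hb, ht⟩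

lemma anti_orbit_lim {f : ℝ → ℝ} (hf : Continuous f) (z : ℕ → ℝ)
    (hstep : ∀ n, z (n+1) = f (z n)) (hanti : Antitone z) (b : ℝ)
    (hb : ∀ n, b ≤ z n) :
    ∃ L, f L = L ∧ b ≤ L ∧ L ≤ z 0 ∧ Tendsto z atTop (𝓝 L) := by
  have hbdd : BddBelow (Set.range z) := ⟨b, by rintro _ ⟨n, rfl⟩; exact hb n⟩
  have ht := tendsto_atTop_ciInf hanti hbdd
  exact ⟨⨅ n, z n, lim_fixed hf hstep ht, le_ciInf hb, ciInf_le hbdd 0, ht⟩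

lemma quartic_ineq (μ : ℝ) (h2 : 2 ≤ μ) (h3 : μ ≤ 3) : μ^4 - 4*μ^3 + 16 ≤ 0 := by
  nlinarith [sq_nonneg (μ-2), mul_nonneg (sub_nonneg.2 h2) (sub_nonneg.2 h3)]

lemma keyz (μ z : ℝ) (hμ2 : 2 < μ) (hμ3 : μ < 3) (hz1 : 1 ≤ z) (hz2 : z ≤ μ^2/4) :
    0 ≤ μ*z - z^2 - 1 := by
  have hq := quartic_ineq μ hμ2.le hμ3.le
  nlinarith [mul_nonneg (sub_nonneg.2 hz1) (sub_nonneg.2 hz2)]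

lemma keyz2 (μ z : ℝ) (hμ2 : 2 < μ) (hμ3 : μ < 3) (hz1 : 1 ≤ z) :
    (z - 1) * (μ*z - z^2 - 1) < 1 := by
  have h : (0:ℝ) < z^2 - (μ+1)*z + (μ+1) := by
    nlinarith [sq_nonneg (2*z-(μ+1)), mul_pos (by linarith : (0:ℝ) < μ+1) (by linarith : (0:ℝ) < 3-μ)]
  nlinarith [mul_pos (lt_of_lt_of_le one_pos hz1) h]

def gfun (μ : ℝ) : ℝ → ℝ := fun a => |1 - μ*a| * |1 - μ * logistic μ a|

lemma gfun_cont (μ : ℝ) : Continuous (gfun μ) := by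
  unfold gfun
  exact ((continuous_const.sub (continuous_const.mul continuous_id)).abs).mul
    ((continuous_const.sub (continuous_const.mul (logistic_cont μ))).abs)

lemma gfun_nonneg (μ a : ℝ) : 0 ≤ gfun μ a := mul_nonneg (abs_nonneg _) (abs_nonneg _)

lemma gfun_lt_one (μ a : ℝ) (hμ2 : 2 < μ) (hμ3 : μ < 3) (ha1 : 1/μ ≤ a)
    (ha2 : a ≤ μ/4) : gfun μ a < 1 := by
  have hμ0 : (0:ℝ) < μ := by linarith
  have hz1 : 1 ≤ μ * a := by
    have := (div_le_iff₀ hμ0).mp ha1; linarith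
  have hz2 : μ * a ≤ μ^2/4 := by nlinarith
  have hk := keyz μ (μ*a) hμ2 hμ3 hz1 hz2
  have hfa : μ * logistic μ a = μ*(μ*a) - (μ*a)^2 := by unfold logistic; ring
  unfold gfun
  rw [abs_of_nonpos (by linarith), hfa, abs_of_nonpos (by nlinarith)]
  have := keyz2 μ (μ*a) hμ2 hμ3 hz1
  nlinarith

lemma logistic_inv_lower (μ a : ℝ) (hμ2 : 2 < μ) (hμ3 : μ < 3) (ha1 : 1/μ ≤ a)
    (ha2 : a ≤ μ/4) : 1/μ ≤ logistic μ a := by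
  have hμ0 : (0:ℝ) < μ := by linarith
  have h1 : 1 ≤ μ * a := by
    have := (div_le_iff₀ hμ0).mp ha1; linarith
  have h2 : μ * a ≤ μ^2/4 := by nlinarith
  have hk := keyz μ (μ*a) hμ2 hμ3 h1 h2
  show 1/μ ≤ μ * a * (1 - a)
  rw [div_le_iff₀ hμ0]
  nlinarith

/-- All orbits of interior points converge to `1 - 1/μ`. -/
lemma logistic_orbit_tendsto (μ : ℝ) (hμ1 : 1 < μ) (hμ3 : μ < 3) (x : ℝ)
    (hx0 : 0 < x) (hx1 : x < 1) :
    Tendsto (fun n => (logistic μ)^[n] x) atTop (𝓝 (1 - 1/μ)) := by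
  have hμ0 : (0:ℝ) < μ := by linarith
  have hμne : μ ≠ 0 := ne_of_gt hμ0
  set f : ℝ → ℝ := logistic μ with hfdef
  set p : ℝ := 1 - 1/μ with hpdef
  have hinvμ : 1/μ < 1 := by rw [div_lt_one hμ0]; linarith
  have hinvμ0 : 0 < 1/μ := by positivity
  have hp0 : 0 < p := by simp only [hpdef]; linarith
  have hfp : f p = p := logistic_fix μ hμne
  have hcont : Continuous f := logistic_cont μ
  -- basic step facts
  have hfpos : ∀ y, 0 < y → y < 1 → 0 < f y := by
    intro y h1 h2
    have : 0 < μ * y * (1 - y) := mul_pos (mul_pos hμ0 h1) (by linarith)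
    simpa [hfdef, logistic] using this
  have hfq : ∀ y, f y ≤ μ/4 := fun y => logistic_le_quarter μ y hμ0
  have hq1 : μ/4 < 1 := by linarith
  have hfabove : ∀ a, 0 < a → a < p → a < f a := by
    intro a h1 h2
    have : f a - a = μ * a * (p - a) := by
      simp only [hfdef, logistic, hpdef]; field_simp; ring
    nlinarith [mul_pos (mul_pos hμ0 h1) (sub_pos.2 h2)]
  have hfbelow : ∀ a, p ≤ a → f a ≤ a := by
    intro a h1
    have : f a - a = μ * a * (p - a) := by
      simp only [hfdef, logistic, hpdef]; field_simp; ring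
    nlinarith [mul_nonneg (mul_nonneg hμ0.le (le_trans hp0.le h1)) (sub_nonneg.2 h1)]
  -- the shifted orbit
  set y : ℕ → ℝ := fun n => f^[n] (f x) with hydef
  have hystep : ∀ n, y (n+1) = f (y n) := by
    intro n; simp only [hydef, Function.iterate_succ_apply']
  have hmem : ∀ n, 0 < y n ∧ y n ≤ μ/4 := by
    intro n
    induction n with
    | zero => exact ⟨hfpos x hx0 hx1, hfq x⟩
    | succ k ih =>
      rw [hystep k]
      exact ⟨hfpos _ ih.1 (lt_of_le_of_lt ih.2 hq1), hfq _⟩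
  -- reduce to showing Tendsto y atTop (𝓝 p)
  suffices hY : Tendsto y atTop (𝓝 p) by
    have : ∀ n, y n = f^[n+1] x := by
      intro n; simp only [hydef, ← Function.iterate_succ_apply]
    rw [show y = (fun n => f^[n+1] x) from funext this] at hY
    exact (tendsto_add_atTop_iff_nat 1).mp hY
  rcases le_or_gt μ 2 with hμ2 | hμ2
  · -- case μ ≤ 2 : monotone dynamics on (0, 1/2]
    have hphalf : p ≤ 1/2 := by
      simp only [hpdef]
      have : (1:ℝ)/2 ≤ 1/μ := by rw [le_div_iff₀ hμ0]; linarith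
      linarith
    have hyhalf : ∀ n, y n ≤ 1/2 := fun n => le_trans (hmem n).2 (by linarith)
    by_cases hall : ∀ n, y n < p
    · have hmono : Monotone y := by
        apply monotone_nat_of_le_succ
        intro n
        rw [hystep n]
        exact (hfabove (y n) (hmem n).1 (hall n)).le
      obtain ⟨L, hLfix, hL0, hLp, hLt⟩ := mono_orbit_lim hcont y hystep hmono p
        (fun n => (hall n).le)
      rcases logistic_fixed_class μ L hμne hLfix with rfl | rfl
      · exact absurd (lt_of_lt_of_le (hmem 0).1 hL0) (lt_irrefl 0)
      · exact hLt
    · push_neg at hall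
      obtain ⟨n₀, hn₀⟩ := hall
      set z : ℕ → ℝ := fun k => f^[k] (y n₀) with hzdef
      have hzstep : ∀ k, z (k+1) = f (z k) := by
        intro k; simp only [hzdef, Function.iterate_succ_apply']
      have hzy : ∀ k, z k = y (n₀ + k) := by
        intro k
        induction k with
        | zero => simp [hzdef]
        | succ m ih => rw [hzstep m, ih, ← hystep (n₀ + m)]; rfl
      have hzmem : ∀ k, p ≤ z k ∧ z k ≤ 1/2 := by
        intro k
        induction k with
        | zero => exact ⟨hn₀, by rw [hzy 0]; exact hyhalf n₀⟩
        | succ m ih =>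
          rw [hzstep m]
          constructor
          · have hid : f (z m) - p = (z m - p) * (1 - μ * z m) :=
              logistic_sub μ (z m) hμne
            have h1 : 0 ≤ z m - p := sub_nonneg.2 ih.1
            have h2 : 0 ≤ 1 - μ * z m := by nlinarith [ih.2]
            nlinarith [mul_nonneg h1 h2]
          · refine le_trans (hfq _) (by linarith)
      have hanti : Antitone z := by
        apply antitone_nat_of_succ_le
        intro k
        rw [hzstep k]
        exact hfbelow (z k) (hzmem k).1
      obtain ⟨L, hLfix, hpL, hL0, hLt⟩ := anti_orbit_lim hcont z hzstep hanti p
        (fun k => (hzmem k).1)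
      rcases logistic_fixed_class μ L hμne hLfix with rfl | rfl
      · exact absurd (lt_of_lt_of_le hp0 hpL) (lt_irrefl 0)
      · -- Tendsto z atTop (𝓝 p) ⇒ Tendsto y atTop (𝓝 p)
        have : Tendsto (fun k => y (k + n₀)) atTop (𝓝 p) := by
          have heq : (fun k => y (k + n₀)) = z := by
            funext k; rw [hzy k, Nat.add_comm]
          rw [heq]; exact hLt
        exact (tendsto_add_atTop_iff_nat n₀).mp this
  · -- case 2 < μ : two-step contraction on A = [1/μ, μ/4]
    have hinvp : 1/μ < p := by
      simp only [hpdef]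
      have : 1/μ < 1/2 := by rw [div_lt_iff₀ hμ0]; linarith
      linarith
    have hpq : p ≤ μ/4 := by
      have h1 : p = (μ-1)/μ := by simp only [hpdef]; field_simp
      rw [h1, div_le_iff₀ hμ0]
      nlinarith [sq_nonneg (μ - 2)]
    -- invariance of A
    have hinv : ∀ a, 1/μ ≤ a → a ≤ μ/4 → (1/μ ≤ f a ∧ f a ≤ μ/4) :=
      fun a ha1 ha2 => ⟨logistic_inv_lower μ a hμ2 hμ3 ha1 ha2, hfq a⟩
    -- phase 1 : enter A
    have hphase1 : ∃ m, 1/μ ≤ y m := by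
      by_contra hallb
      push_neg at hallb
      have hmono : Monotone y := by
        apply monotone_nat_of_le_succ
        intro n
        rw [hystep n]
        exact (hfabove (y n) (hmem n).1 (lt_trans (hallb n) hinvp)).le
      obtain ⟨L, hLfix, hL0, hLb, _⟩ := mono_orbit_lim hcont y hystep hmono (1/μ)
        (fun n => (hallb n).le)
      rcases logistic_fixed_class μ L hμne hLfix with rfl | rfl
      · exact absurd (lt_of_lt_of_le (hmem 0).1 hL0) (lt_irrefl 0)
      · exact absurd hLb (not_le.2 hinvp)
    obtain ⟨m, hm⟩ := hphase1
    set w : ℝ := y m with hwdef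
    have hwA : 1/μ ≤ w ∧ w ≤ μ/4 := ⟨hm, (hmem m).2⟩
    have hiter : ∀ k, 1/μ ≤ f^[k] w ∧ f^[k] w ≤ μ/4 := by
      intro k
      induction k with
      | zero => exact hwA
      | succ j ih =>
        rw [Function.iterate_succ_apply']
        exact hinv _ ih.1 ih.2
    -- contraction factor via compactness
    have hAne : (Set.Icc (1/μ) (μ/4)).Nonempty := ⟨p, hinvp.le, hpq⟩
    obtain ⟨astar, hastar, hmax⟩ :=
      isCompact_Icc.exists_isMaxOn hAne (gfun_cont μ).continuousOn
    set κ : ℝ := gfun μ astar with hkdef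
    have hκ0 : 0 ≤ κ := gfun_nonneg μ astar
    have hκ1 : κ < 1 := gfun_lt_one μ astar hμ2 hμ3 hastar.1 hastar.2
    -- two-step contraction
    have htwo : ∀ a, 1/μ ≤ a → a ≤ μ/4 → |f (f a) - p| ≤ κ * |a - p| := by
      intro a ha1 ha2
      have e1 : f (f a) - p = (f a - p) * (1 - μ * f a) := logistic_sub μ (f a) hμne
      have e2 : f a - p = (a - p) * (1 - μ * a) := logistic_sub μ a hμne
      have : f (f a) - p = (a - p) * ((1 - μ * a) * (1 - μ * f a)) := by
        rw [e1, e2]; ring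
      rw [this, abs_mul, abs_mul]
      have hga : gfun μ a ≤ κ := isMaxOn_iff.mp hmax a ⟨ha1, ha2⟩
      have : |1 - μ * a| * |1 - μ * f a| = gfun μ a := by rw [hfdef]; rfl
      rw [this]
      calc |a - p| * gfun μ a ≤ |a - p| * κ :=
            mul_le_mul_of_nonneg_left hga (abs_nonneg _)
        _ = κ * |a - p| := mul_comm _ _
    -- geometric decay along even iterates
    have hgeo : ∀ k, |f^[2*k] w - p| ≤ κ^k * |w - p| := by
      intro k
      induction k with
      | zero => simp
      | succ j ih =>
        have h2j : f^[2*(j+1)] w = f (f (f^[2*j] w)) := by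
          rw [show 2*(j+1) = (2*j+1)+1 by ring, Function.iterate_succ_apply',
            Function.iterate_succ_apply']
        rw [h2j]
        calc |f (f (f^[2*j] w)) - p| ≤ κ * |f^[2*j] w - p| :=
              htwo _ (hiter (2*j)).1 (hiter (2*j)).2
          _ ≤ κ * (κ^j * |w - p|) := mul_le_mul_of_nonneg_left ih hκ0
          _ = κ^(j+1) * |w - p| := by ring
    have hκpow : Tendsto (fun k => κ^k * |w - p|) atTop (𝓝 0) := by
      have := (tendsto_pow_atTop_nhds_zero_of_lt_one hκ0 hκ1).mul_const (|w - p|)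
      simpa using this
    have heven : Tendsto (fun k => f^[2*k] w) atTop (𝓝 p) := by
      rw [tendsto_iff_dist_tendsto_zero]
      apply squeeze_zero (fun k => dist_nonneg)
        (fun k => by rw [Real.dist_eq]; exact hgeo k) hκpow
    have hodd : Tendsto (fun k => f^[2*k+1] w) atTop (𝓝 p) := by
      have : Tendsto (fun k => f (f^[2*k] w)) atTop (𝓝 (f p)) :=
        (hcont.tendsto p).comp heven
      rw [hfp] at this
      simpa [Function.iterate_succ_apply'] using this
    have hw : Tendsto (fun j => f^[j] w) atTop (𝓝 p) := by
      rw [Metric.tendsto_atTop] at heven hodd ⊢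
      intro ε hε
      obtain ⟨N₁, hN₁⟩ := heven ε hε
      obtain ⟨N₂, hN₂⟩ := hodd ε hε
      refine ⟨2*N₁ + 2*N₂ + 2, fun n hn => ?_⟩
      rcases Nat.even_or_odd n with ⟨k, hk⟩ | ⟨k, hk⟩
      · have : N₁ ≤ k := by omega
        have := hN₁ k this
        rwa [show 2*k = n by omega] at this
      · have : N₂ ≤ k := by omega
        have := hN₂ k this
        rwa [show 2*k+1 = n by omega] at this
    -- transfer back to y
    have : Tendsto (fun j => y (j + m)) atTop (𝓝 p) := by
      have heq : ∀ j, y (j + m) = f^[j] w := by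
        intro j
        simp only [hydef, hwdef, ← Function.iterate_add_apply]
      rw [funext heq]
      exact hw
    exact (tendsto_add_atTop_iff_nat m).mp this

/-- An `ε`-chain from `p` to `q` for `f` lying in the space `[0,1]`. -/
def EpsChain (f : ℝ → ℝ) (ε p q : ℝ) : Prop :=
  ∃ n : ℕ, 1 ≤ n ∧ ∃ x : ℕ → ℝ, x 0 = p ∧ x n = q ∧
    (∀ i ≤ n, x i ∈ Set.Icc (0 : ℝ) 1) ∧
    ∀ i < n, |f (x i) - x (i + 1)| ≤ ε

/-- A point of `[0,1]` is chain-recurrent if for every `ε > 0` there is an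
`ε`-chain from it to itself. -/
def ChainRecurrent (f : ℝ → ℝ) (p : ℝ) : Prop :=
  p ∈ Set.Icc (0 : ℝ) 1 ∧ ∀ ε > 0, EpsChain f ε p p

set_option maxHeartbeats 2000000 in
/-- For `μ ∈ (1,3)`, the chain-recurrent set of the logistic map on `[0,1]`
consists exactly of the two fixed points `0` and `1 - 1/μ`. -/
theorem chainRecurrent_set_logistic (μ : ℝ) (hμ : μ ∈ Set.Ioo (1 : ℝ) 3) :
    {x : ℝ | ChainRecurrent (logistic μ) x} = {0, 1 - 1 / μ} := by
  obtain ⟨hμ1, hμ3⟩ := hμ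
  have hμ0 : (0:ℝ) < μ := by linarith
  have hμne : μ ≠ 0 := ne_of_gt hμ0
  set f : ℝ → ℝ := logistic μ with hfdef
  set p : ℝ := 1 - 1/μ with hpdef
  have hinvμ : 1/μ < 1 := by rw [div_lt_one hμ0]; linarith
  have hinvμ0 : 0 < 1/μ := by positivity
  have hp0 : 0 < p := by simp only [hpdef]; linarith
  have hp1 : p < 1 := by simp only [hpdef]; linarith
  have hfp : f p = p := logistic_fix μ hμne
  have hq1 : μ/4 < 1 := by linarith
  have hfq : ∀ y, f y ≤ μ/4 := fun y => logistic_le_quarter μ y hμ0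
  ext x
  simp only [Set.mem_setOf_eq, Set.mem_insert_iff, Set.mem_singleton_iff]
  constructor
  · -- hard direction
    rintro ⟨⟨hxl, hxr⟩, hchain⟩
    by_contra hne
    push_neg at hne
    obtain ⟨hx0, hxp⟩ := hne
    -- rule out x > μ/4
    have hxq : x ≤ μ/4 := by
      by_contra hgt
      push_neg at hgt
      obtain ⟨n, hn1, z, hz0, hzn, hzI, hzs⟩ := hchain ((x - μ/4)/2) (by linarith)
      have hlast := hzs (n-1) (by omega)
      rw [Nat.sub_add_cancel hn1, hzn] at hlast
      have : x ≤ f (z (n-1)) + (x - μ/4)/2 := by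
        have := abs_le.mp hlast
        linarith [this.1]
      linarith [hfq (z (n-1))]
    have hx1 : x < 1 := lt_of_le_of_lt hxq hq1
    have hxpos : 0 < x := lt_of_le_of_ne hxl (Ne.symm hx0)
    -- orbit convergence
    have htend : Tendsto (fun n => f^[n] x) atTop (𝓝 p) :=
      logistic_orbit_tendsto μ hμ1 hμ3 x hxpos hx1
    -- iterates stay in [0,1]
    have hiterI : ∀ i, f^[i] x ∈ Set.Icc (0:ℝ) 1 := by
      intro i
      induction i with
      | zero => exact ⟨hxl, hxr⟩
      | succ j ih =>
        rw [Function.iterate_succ_apply']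
        constructor
        · show 0 ≤ μ * (f^[j] x) * (1 - f^[j] x)
          exact mul_nonneg (mul_nonneg hμ0.le ih.1) (by linarith [ih.2])
        · exact le_trans (hfq _) (by linarith)
    -- Lipschitz bound on [0,1]
    have hlip : ∀ a b : ℝ, a ∈ Set.Icc (0:ℝ) 1 → b ∈ Set.Icc (0:ℝ) 1 →
        |f a - f b| ≤ 3 * |a - b| := by
      intro a b ha hb
      have : f a - f b = μ * (a - b) * (1 - a - b) := logistic_diff μ a b
      rw [this, abs_mul, abs_mul, abs_of_pos hμ0]
      have h1 : |1 - a - b| ≤ 1 := by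
        rw [abs_le]; constructor <;> [linarith [ha.2, hb.2]; linarith [ha.1, hb.1]]
      calc μ * |a - b| * |1 - a - b| ≤ μ * |a - b| * 1 :=
            mul_le_mul_of_nonneg_left h1 (by positivity)
        _ ≤ 3 * |a - b| := by nlinarith [abs_nonneg (a - b)]
    -- contraction constants
    set c : ℝ := |2 - μ| with hcdef
    have hc1 : c < 1 := by rw [hcdef, abs_lt]; constructor <;> linarith
    have hc0 : 0 ≤ c := abs_nonneg _
    set κ : ℝ := (1 + c)/2 with hκdef
    have hκ1 : κ < 1 := by rw [hκdef]; linarith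
    have hκ0 : 0 ≤ κ := by rw [hκdef]; linarith
    have hxpne : 0 < |x - p| := abs_pos.mpr (sub_ne_zero.mpr hxp)
    set δ : ℝ := min ((1 - c)/(2*μ)) (|x - p|/2) with hδdef
    have hδ0 : 0 < δ := lt_min (div_pos (by linarith) (by linarith)) (by positivity)
    have hδμ : μ * δ ≤ (1 - c)/2 := by
      have h1 : δ ≤ (1 - c)/(2*μ) := min_le_left _ _
      calc μ * δ ≤ μ * ((1 - c)/(2*μ)) := mul_le_mul_of_nonneg_left h1 hμ0.le
        _ = (1 - c)/2 := by field_simp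
    have hδx : δ < |x - p| := by
      have h1 : δ ≤ |x - p|/2 := min_le_right _ _
      linarith
    -- local trap
    have htrap : ∀ y : ℝ, |y - p| ≤ δ → |f y - p| ≤ κ * δ := by
      intro y hy
      have hid : f y - p = (y - p) * (1 - μ * y) := logistic_sub μ y hμne
      have h2 : 1 - μ * y = (2 - μ) - μ * (y - p) := by
        simp only [hpdef]; field_simp; ring
      have h3 : |1 - μ * y| ≤ c + μ * δ := by
        rw [h2]
        calc |(2 - μ) - μ * (y - p)| ≤ |2 - μ| + |μ * (y - p)| := abs_sub _ _
          _ = c + μ * |y - p| := by rw [hcdef, abs_mul, abs_of_pos hμ0]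
          _ ≤ c + μ * δ := by nlinarith
      have h4 : c + μ * δ ≤ κ := by rw [hκdef]; linarith
      calc |f y - p| = |y - p| * |1 - μ * y| := by rw [hid, abs_mul]
        _ ≤ δ * κ := mul_le_mul hy (le_trans h3 h4) (abs_nonneg _) hδ0.le
        _ = κ * δ := mul_comm _ _
    -- find N
    rw [Metric.tendsto_atTop] at htend
    obtain ⟨N, hN⟩ := htend (δ/2) (by positivity)
    have hNx : ∀ n ≥ N, |f^[n] x - p| < δ/2 := by
      intro n hn; have := hN n hn; rwa [Real.dist_eq] at this
    -- N ≥ 1 (else immediate contradiction)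
    rcases Nat.eq_zero_or_pos N with rfl | hN1
    · have := hNx 0 le_rfl
      simp only [Function.iterate_zero_apply] at this
      linarith
    -- aperiodicity: f^[i] x ≠ x for i ≥ 1
    have haper : ∀ i, 1 ≤ i → f^[i] x ≠ x := by
      intro i hi1 hper
      have hsub : ∀ k : ℕ, f^[k * i] x = x := by
        intro k
        induction k with
        | zero => simp
        | succ j ih =>
          rw [show (j+1) * i = i + j * i by ring, Function.iterate_add_apply, ih, hper]
      have hmul : Tendsto (fun k : ℕ => k * i) atTop atTop := by
        apply tendsto_atTop_atTop.mpr
        intro b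
        exact ⟨b, fun a ha => le_trans ha (Nat.le_mul_of_pos_right a hi1)⟩
      have h2 : Tendsto (fun k : ℕ => f^[k * i] x) atTop (𝓝 p) :=
        (logistic_orbit_tendsto μ hμ1 hμ3 x hxpos hx1).comp hmul
      rw [funext hsub] at h2
      exact hxp (tendsto_nhds_unique tendsto_const_nhds h2)
    -- minimal return distance over the first N steps
    have hIccne : (Finset.Icc 1 N).Nonempty := ⟨1, Finset.mem_Icc.mpr ⟨le_rfl, hN1⟩⟩
    set ρ : ℝ := (Finset.Icc 1 N).inf' hIccne (fun i => |f^[i] x - x|) with hρdef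
    have hρpos : 0 < ρ := by
      rw [hρdef, Finset.lt_inf'_iff]
      intro i hi
      rw [Finset.mem_Icc] at hi
      exact abs_pos.mpr (sub_ne_zero.mpr (haper i hi.1))
    have hρle : ∀ i, 1 ≤ i → i ≤ N → ρ ≤ |f^[i] x - x| := by
      intro i h1 h2
      exact Finset.inf'_le _ (Finset.mem_Icc.mpr ⟨h1, h2⟩)
    -- choose ε
    have hpow : (0:ℝ) < 3^(N+1) := by positivity
    set ε : ℝ := min (min ((δ - κ*δ)/2) (ρ/(2 * 3^(N+1)))) (δ/(4 * 3^(N+1))) with hεdef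
    have hε0 : 0 < ε := by
      apply lt_min (lt_min _ _) _
      · nlinarith
      · positivity
      · positivity
    obtain ⟨n, hn1, z, hz0, hzn, hzI, hzs⟩ := hchain ε hε0
    -- shadowing
    have hshadow : ∀ i, i ≤ n → |z i - f^[i] x| ≤ ε * (3^(i+1) - 1)/2 := by
      intro i
      induction i with
      | zero =>
        intro _
        rw [hz0]
        simp only [Function.iterate_zero_apply, sub_self, abs_zero]
        nlinarith
      | succ j ih =>
        intro hj1
        have hj : j ≤ n := by omega
        have h1 : |f (z j) - z (j+1)| ≤ ε := hzs j (by omega)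
        have h2 : |f (z j) - f (f^[j] x)| ≤ 3 * |z j - f^[j] x| :=
          hlip (z j) (f^[j] x) (hzI j hj) (hiterI j)
        have h3 := ih hj
        have h4 : |z (j+1) - f^[j+1] x| ≤ |z (j+1) - f (z j)| + |f (z j) - f (f^[j] x)| := by
          rw [Function.iterate_succ_apply']
          exact abs_sub_le _ _ _
        rw [abs_sub_comm (z (j+1)) (f (z j))] at h4
        have hpe : (3:ℝ)^(j+1+1) = 3 * 3^(j+1) := by ring
        calc |z (j+1) - f^[j+1] x| ≤ ε + 3 * |z j - f^[j] x| := by linarith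
          _ ≤ ε + 3 * (ε * (3^(j+1) - 1)/2) := by linarith
          _ = ε * (3^(j+1+1) - 1)/2 := by rw [hpe]; ring
    have hshadowN : ∀ i, i ≤ n → i ≤ N → |z i - f^[i] x| ≤ ε * 3^(N+1) := by
      intro i hin hiN
      refine le_trans (hshadow i hin) ?_
      have h1 : (3:ℝ)^(i+1) ≤ 3^(N+1) := by
        apply pow_le_pow_right₀ (by norm_num)
        omega
      nlinarith
    rcases le_or_gt n N with hnN | hNn
    · -- short chain: contradicts minimal return distance
      have hs := hshadowN n le_rfl hnN
      rw [hzn] at hs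
      have hρn := hρle n hn1 hnN
      rw [abs_sub_comm] at hρn
      have hεdel : ε * 3^(N+1) ≤ ρ/2 := by
        have h1 : ε ≤ ρ/(2 * 3^(N+1)) := le_trans (min_le_left _ _) (min_le_right _ _)
        rw [le_div_iff₀ (by positivity)] at h1
        linarith
      linarith
    · -- long chain: gets trapped near p, can't return to x
      have hεδ4 : ε * 3^(N+1) ≤ δ/4 := by
        have h1 : ε ≤ δ/(4 * 3^(N+1)) := min_le_right _ _
        rw [le_div_iff₀ (by positivity)] at h1
        linarith
      have hεm : ε ≤ (δ - κ*δ)/2 := le_trans (min_le_left _ _) (min_le_left _ _)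
      have hinJ : ∀ j, N ≤ j → j ≤ n → |z j - p| ≤ δ := by
        intro j hNj
        induction j, hNj using Nat.le_induction with
        | base =>
          intro hNn'
          have h1 := hshadowN N hNn' le_rfl
          have h2 := hNx N le_rfl
          calc |z N - p| ≤ |z N - f^[N] x| + |f^[N] x - p| := abs_sub_le _ _ _
            _ ≤ δ/4 + δ/2 := by linarith
            _ ≤ δ := by linarith
        | succ k hk ih =>
          intro hkn
          have hzk := ih (by omega)
          have h1 : |f (z k) - z (k+1)| ≤ ε := hzs k (by omega)
          have h2 : |f (z k) - p| ≤ κ * δ := htrap (z k) hzk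
          calc |z (k+1) - p| ≤ |z (k+1) - f (z k)| + |f (z k) - p| := abs_sub_le _ _ _
            _ ≤ ε + κ * δ := by rw [abs_sub_comm]; linarith
            _ ≤ δ := by linarith
      have := hinJ n (by omega) le_rfl
      rw [hzn] at this
      linarith
  · rintro (rfl | rfl)
    · refine ⟨⟨le_refl 0, zero_le_one⟩, fun ε hε => ⟨1, le_rfl, fun _ => 0, rfl, rfl,
        fun i _ => ⟨le_refl 0, zero_le_one⟩, fun i _ => ?_⟩⟩
      simp only [hfdef, logistic]
      norm_num
      linarith
    · refine ⟨⟨hp0.le, hp1.le⟩, fun ε hε => ⟨1, le_rfl, fun _ => p, rfl, rfl,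
        fun i _ => ⟨hp0.le, hp1.le⟩, fun i _ => ?_⟩⟩
      rw [hfp]
      simp only [sub_self, abs_zero]
      linarith
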